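/- Let k, m ∈ ℕ \ {0}, σ = k/m, and define w_{k,m}(x,ξ) = (1 + |x|^{2k} + |ξ|^{2m})^{1/2} for (x,ξ) ∈ ℝ^d × ℝ^d. Then for every n ∈ ℝ, the function w_{k,m}^n belongs to G^{nk, σ}. -/

import Mathlib

noncomputable section

open Real Filter MeasureTheory Set
open scoped BigOperators Topology

abbrev Rd (d : ℕ) := EuclideanSpace ℝ (Fin d)

/-- Iterated directional derivative along a list of directions. -/
def iterDeriv {E F : Type*} [NormedAddCommGroup E] [NormedSpace ℝ E]
    [NormedAddCommGroup F] [NormedSpace ℝ F] : List E → (E → F) → E → F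
  | [], a => a
  | v :: l, a => fun p => fderiv ℝ (iterDeriv l a) p v

/-- Directions in the `x` variables according to multi-index `α`. -/
def xDirs {d : ℕ} (α : Fin d → ℕ) : List (Rd d × Rd d) :=
  ((List.finRange d).map fun j =>
    List.replicate (α j) ((EuclideanSpace.single j (1:ℝ), (0 : Rd d)))).flatten

/-- Directions in the `ξ` variables according to multi-index `β`. -/
def xiDirs {d : ℕ} (β : Fin d → ℕ) : List (Rd d × Rd d) :=
  ((List.finRange d).map fun j =>
    List.replicate (β j) (((0 : Rd d), EuclideanSpace.single j (1:ℝ)))).flatten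

/-- The anisotropic weight `θ_σ(x,ξ) = 1 + |x| + |ξ|^(1/σ)`. -/
def theta (σ : ℝ) {d : ℕ} (p : Rd d × Rd d) : ℝ := 1 + ‖p.1‖ + ‖p.2‖ ^ (1/σ)

/-- The anisotropic Shubin symbol class `G^{m,σ}`:
`a` is smooth and `|∂_x^α ∂_ξ^β a(x,ξ)| ≤ C_{α,β} θ_σ(x,ξ)^(m - |α| - σ|β|)`. -/
def IsShubin {d : ℕ} (σ m : ℝ) (a : Rd d × Rd d → ℂ) : Prop :=
  ContDiff ℝ (⊤ : ℕ∞) a ∧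
  ∀ α β : Fin d → ℕ, ∃ C > 0, ∀ x ξ : Rd d,
    ‖iterDeriv (xDirs α ++ xiDirs β) a (x, ξ)‖ ≤
      C * theta σ (x, ξ) ^ (m - (∑ j, (α j : ℝ)) - σ * (∑ j, (β j : ℝ)))

section general
variable {E F : Type*} [NormedAddCommGroup E] [NormedSpace ℝ E]
    [NormedAddCommGroup F] [NormedSpace ℝ F]

@[simp] lemma iterDeriv_nil (a : E → F) : iterDeriv [] a = a := rfl

lemma iterDeriv_cons (v : E) (l : List E) (a : E → F) :
    iterDeriv (v :: l) a = fun p => fderiv ℝ (iterDeriv l a) p v := rfl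

lemma iterDeriv_congr {l : List E} {a b : E → F} (h : ∀ p, a p = b p) :
    iterDeriv l a = iterDeriv l b := by
  have : a = b := funext h
  rw [this]

lemma iterDeriv_concat (l : List E) (v : E) (a : E → F) :
    iterDeriv (l ++ [v]) a = iterDeriv l (fun p => fderiv ℝ a p v) := by
  induction l with
  | nil => rfl
  | cons w l ih => simp only [List.cons_append, iterDeriv_cons, ih]

lemma iterDeriv_zero (l : List E) : iterDeriv l (fun _ => (0:F)) = fun _ => 0 := by
  induction l with
  | nil => rfl
  | cons w l ih =>
      funext p
      simp only [iterDeriv_cons, ih, fderiv_const_apply]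
      simp

lemma iterDeriv_const_cons (v : E) (l : List E) (c : F) :
    iterDeriv (v :: l) (fun _ => c) = fun _ => 0 := by
  induction l generalizing v with
  | nil =>
      funext p; simp only [iterDeriv_cons, iterDeriv_nil, fderiv_const_apply]; simp
  | cons w l ih =>
      funext p
      simp only [iterDeriv_cons] at ih ⊢
      rw [show (fun p => (fderiv ℝ (iterDeriv l fun _ => c) p) w) = fun _ => (0:F) from ih w]
      simp [fderiv_const_apply]

lemma iterDeriv_contDiff {a : E → F} (ha : ContDiff ℝ (⊤:ℕ∞) a) (l : List E) :
    ContDiff ℝ (⊤:ℕ∞) (iterDeriv l a) := by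
  induction l with
  | nil => exact ha
  | cons v l ih =>
      have h1 : ContDiff ℝ (⊤:ℕ∞) (fderiv ℝ (iterDeriv l a)) :=
        ih.fderiv_right (le_refl _)
      have := (ContinuousLinearMap.apply ℝ F v).contDiff.comp h1
      exact this

lemma ContDiff.diffAt' {a : E → F} (ha : ContDiff ℝ (⊤:ℕ∞) a) {p : E} :
    DifferentiableAt ℝ a p :=
  (ha.differentiable (by simp)).differentiableAt

lemma iterDeriv_add {a b : E → F} (ha : ContDiff ℝ (⊤:ℕ∞) a) (hb : ContDiff ℝ (⊤:ℕ∞) b)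
    (l : List E) :
    iterDeriv l (fun p => a p + b p) = fun p => iterDeriv l a p + iterDeriv l b p := by
  induction l with
  | nil => rfl
  | cons v l ih =>
      funext p
      simp only [iterDeriv_cons]
      rw [ih]
      rw [fderiv_fun_add (iterDeriv_contDiff ha l).diffAt' (iterDeriv_contDiff hb l).diffAt']
      rfl
end general

section sums
variable {E : Type*} [NormedAddCommGroup E] [NormedSpace ℝ E]

lemma sum_map_add {α} (T : List α) (f g : α → ℝ) :
    (T.map f).sum + (T.map g).sum = (T.map (fun x => f x + g x)).sum := by
  induction T with
  | nil => simp
  | cons a T ih => simp only [List.map_cons, List.sum_cons]; linarith [ih]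

lemma abs_list_sum_le {α} (T : List α) (f : α → ℝ) (M : ℝ) (h : ∀ a ∈ T, |f a| ≤ M) :
    |(T.map f).sum| ≤ T.length * M := by
  induction T with
  | nil => simp
  | cons a T ih =>
      simp only [List.map_cons, List.sum_cons, List.length_cons]
      have h1 := h a (by simp)
      have h2 := ih (fun b hb => h b (by simp [hb]))
      push_cast
      calc |f a + (T.map f).sum| ≤ |f a| + |(T.map f).sum| := abs_add_le _ _
        _ ≤ M + T.length * M := add_le_add h1 h2
        _ = (T.length + 1) * M := by ring

lemma contDiff_listSum {α} (T : List α) (F : α → E → ℝ)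
    (h : ∀ i ∈ T, ContDiff ℝ (⊤:ℕ∞) (F i)) :
    ContDiff ℝ (⊤:ℕ∞) (fun q => (T.map (fun i => F i q)).sum) := by
  induction T with
  | nil => simpa using contDiff_const
  | cons b T ihT =>
      simp only [List.map_cons, List.sum_cons]
      exact (h b (by simp)).add (ihT (fun i hi => h i (by simp [hi])))

lemma fderiv_listSum_apply {α} (T : List α) (F : α → E → ℝ)
    (h : ∀ i ∈ T, ContDiff ℝ (⊤:ℕ∞) (F i)) (p v : E) :
    fderiv ℝ (fun q => (T.map (fun i => F i q)).sum) p v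
      = (T.map (fun i => fderiv ℝ (F i) p v)).sum := by
  induction T with
  | nil => simp
  | cons a T ih =>
      simp only [List.map_cons, List.sum_cons]
      have hd : DifferentiableAt ℝ (F a) p := (h a (by simp)).diffAt'
      have hs : DifferentiableAt ℝ (fun q => (T.map (fun i => F i q)).sum) p :=
        (contDiff_listSum T F (fun i hi => h i (by simp [hi]))).diffAt'
      rw [fderiv_fun_add hd hs]
      simp only [ContinuousLinearMap.add_apply]
      rw [ih (fun i hi => h i (by simp [hi]))]

lemma mulDecomp {γ : Type*} (pj : γ → E) (f g : E → ℝ)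
    (hf : ContDiff ℝ (⊤:ℕ∞) f) (hg : ContDiff ℝ (⊤:ℕ∞) g) :
    ∀ L : List γ, ∃ T : List (List γ × List γ),
      (∀ pr ∈ T, (pr.1 ++ pr.2).Perm L) ∧
      ∀ p, iterDeriv (L.map pj) (fun q => f q * g q) p
        = (T.map (fun pr => iterDeriv (pr.1.map pj) f p * iterDeriv (pr.2.map pj) g p)).sum := by
  intro L
  induction L with
  | nil => exact ⟨[([], [])], by simp, by simp⟩
  | cons v L ih =>
      obtain ⟨T', hperm, hval⟩ := ih
      refine ⟨(T'.map fun pr => (v :: pr.1, pr.2)) ++ (T'.map fun pr => (pr.1, v :: pr.2)),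
        ?_, ?_⟩
      · intro pr hpr
        rcases List.mem_append.1 hpr with h | h <;> obtain ⟨pr', hpr', rfl⟩ := List.mem_map.1 h
        · exact (hperm pr' hpr').cons v
        · simpa using (List.perm_middle.trans ((hperm pr' hpr').cons v))
      · intro p
        simp only [List.map_cons, iterDeriv_cons]
        rw [show (iterDeriv (L.map pj) fun q => f q * g q)
            = (fun p => (T'.map (fun pr =>
                iterDeriv (pr.1.map pj) f p * iterDeriv (pr.2.map pj) g p)).sum)
          from funext hval]
        have hsm : ∀ pr ∈ T', ContDiff ℝ (⊤:ℕ∞)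
            (fun q => iterDeriv (pr.1.map pj) f q * iterDeriv (pr.2.map pj) g q) :=
          fun pr _ => (iterDeriv_contDiff hf _).mul (iterDeriv_contDiff hg _)
        rw [fderiv_listSum_apply T' _ hsm p (pj v)]
        rw [List.map_append, List.sum_append, List.map_map, List.map_map]
        rw [sum_map_add]
        congr 1
        apply List.map_congr_left
        intro pr hpr
        have h1 : DifferentiableAt ℝ (iterDeriv (pr.1.map pj) f) p :=
          (iterDeriv_contDiff hf _).diffAt'
        have h2 : DifferentiableAt ℝ (iterDeriv (pr.2.map pj) g) p :=
          (iterDeriv_contDiff hg _).diffAt'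
        rw [fderiv_fun_mul h1 h2]
        simp only [Function.comp, List.map_cons, iterDeriv_cons,
          ContinuousLinearMap.add_apply, ContinuousLinearMap.smul_apply, smul_eq_mul]
        ring

lemma exists_uniform {α} (T : List α) (P : α → ℝ → Prop)
    (mono : ∀ a C C', C ≤ C' → P a C → P a C')
    (h : ∀ a ∈ T, ∃ C, 0 < C ∧ P a C) : ∃ C, 0 < C ∧ ∀ a ∈ T, P a C := by
  induction T with
  | nil => exact ⟨1, one_pos, by simp⟩
  | cons a T ih =>
      obtain ⟨C1, hC1, hP1⟩ := h a (by simp)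
      obtain ⟨C2, hC2, hP2⟩ := ih (fun b hb => h b (by simp [hb]))
      refine ⟨max C1 C2, lt_max_of_lt_left hC1, ?_⟩
      intro b hb
      rcases List.mem_cons.1 hb with rfl | hb
      · exact mono b C1 _ (le_max_left _ _) hP1
      · exact mono b C2 _ (le_max_right _ _) (hP2 b hb)

section shubin
variable {d : ℕ} {σ : ℝ}

lemma theta_ge_one (p : Rd d × Rd d) : 1 ≤ theta σ p := by
  have h1 : (0:ℝ) ≤ ‖p.1‖ := norm_nonneg _
  have h2 : (0:ℝ) ≤ ‖p.2‖ ^ (1/σ) := Real.rpow_nonneg (norm_nonneg _) _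
  unfold theta; linarith

lemma theta_pos (p : Rd d × Rd d) : 0 < theta σ p := lt_of_lt_of_le one_pos (theta_ge_one p)

lemma norm_fst_le_theta (p : Rd d × Rd d) : ‖p.1‖ ≤ theta σ p := by
  have h2 : (0:ℝ) ≤ ‖p.2‖ ^ (1/σ) := Real.rpow_nonneg (norm_nonneg _) _
  unfold theta; linarith

lemma norm_snd_le_theta (hσ : 0 < σ) (p : Rd d × Rd d) : ‖p.2‖ ≤ theta σ p ^ σ := by
  have h1 : ‖p.2‖ ^ (1/σ) ≤ theta σ p := by
    have h0 : (0:ℝ) ≤ ‖p.1‖ := norm_nonneg _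
    unfold theta; linarith
  have := Real.rpow_le_rpow (Real.rpow_nonneg (norm_nonneg _) _) h1 hσ.le
  rwa [← Real.rpow_mul (norm_nonneg _), one_div_mul_cancel hσ.ne', Real.rpow_one] at this

def OKdir (σ : ℝ) {d : ℕ} (e : (Rd d × Rd d) × ℝ) : Prop :=
  (∃ j : Fin d, e = ((EuclideanSpace.single j (1:ℝ), 0), 1)) ∨
  (∃ j : Fin d, e = ((0, EuclideanSpace.single j (1:ℝ)), σ))

def Wt {d : ℕ} (L : List ((Rd d × Rd d) × ℝ)) : ℝ := (L.map Prod.snd).sum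

def GoodN (σ : ℝ) {d : ℕ} (N : ℕ) (r : ℝ) (f : Rd d × Rd d → ℝ) : Prop :=
  ContDiff ℝ (⊤:ℕ∞) f ∧
  ∀ L : List ((Rd d × Rd d) × ℝ), (∀ e ∈ L, OKdir σ e) → L.length ≤ N →
    ∃ C, 0 < C ∧ ∀ p, |iterDeriv (L.map Prod.fst) f p| ≤ C * theta σ p ^ (r - Wt L)

lemma good_mono {N : ℕ} {r r' : ℝ} {f : Rd d × Rd d → ℝ} (hr : r ≤ r')
    (h : GoodN σ N r f) : GoodN σ N r' f := by
  refine ⟨h.1, fun L hok hlen => ?_⟩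
  obtain ⟨C, hC, hb⟩ := h.2 L hok hlen
  refine ⟨C, hC, fun p => (hb p).trans ?_⟩
  exact mul_le_mul_of_nonneg_left
    (Real.rpow_le_rpow_of_exponent_le (theta_ge_one p) (by linarith)) hC.le

lemma good_const {N : ℕ} {r : ℝ} (hr : 0 ≤ r) (c : ℝ) :
    GoodN σ N r (fun _ : Rd d × Rd d => c) := by
  refine ⟨contDiff_const, fun L hok hlen => ?_⟩
  refine ⟨|c| + 1, by positivity, fun p => ?_⟩
  match L with
  | [] =>
      simp only [List.map_nil, iterDeriv_nil, Wt, List.map_nil, List.sum_nil, sub_zero]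
      have h1 : (1:ℝ) ≤ theta σ p ^ r := Real.one_le_rpow (theta_ge_one p) hr
      nlinarith [abs_nonneg c]
  | e :: L =>
      simp only [List.map_cons, iterDeriv_const_cons]
      have : (0:ℝ) < theta σ p ^ (r - Wt (e :: L)) := Real.rpow_pos_of_pos (theta_pos p) _
      simp only [abs_zero]
      positivity

lemma good_add {N : ℕ} {r : ℝ} {f g : Rd d × Rd d → ℝ}
    (hf : GoodN σ N r f) (hg : GoodN σ N r g) :
    GoodN σ N r (fun p => f p + g p) := by
  refine ⟨hf.1.add hg.1, fun L hok hlen => ?_⟩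
  obtain ⟨C1, hC1, hb1⟩ := hf.2 L hok hlen
  obtain ⟨C2, hC2, hb2⟩ := hg.2 L hok hlen
  refine ⟨C1 + C2, by positivity, fun p => ?_⟩
  rw [iterDeriv_add hf.1 hg.1]
  calc |iterDeriv (L.map Prod.fst) f p + iterDeriv (L.map Prod.fst) g p|
      ≤ |iterDeriv (L.map Prod.fst) f p| + |iterDeriv (L.map Prod.fst) g p| := abs_add_le _ _
    _ ≤ C1 * theta σ p ^ (r - Wt L) + C2 * theta σ p ^ (r - Wt L) := add_le_add (hb1 p) (hb2 p)
    _ = (C1 + C2) * theta σ p ^ (r - Wt L) := by ring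

lemma good_mul {N : ℕ} {r s : ℝ} {f g : Rd d × Rd d → ℝ}
    (hf : GoodN σ N r f) (hg : GoodN σ N s g) :
    GoodN σ N (r + s) (fun p => f p * g p) := by
  refine ⟨hf.1.mul hg.1, fun L hok hlen => ?_⟩
  obtain ⟨T, hperm, hval⟩ := mulDecomp (Prod.fst : (Rd d × Rd d) × ℝ → Rd d × Rd d)
    f g hf.1 hg.1 L
  have huni : ∃ C, 0 < C ∧ ∀ pr ∈ T, ∀ p,
      |iterDeriv (pr.1.map Prod.fst) f p * iterDeriv (pr.2.map Prod.fst) g p|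
        ≤ C * theta σ p ^ (r + s - Wt L) := by
    apply exists_uniform
    · intro a C C' hCC hP p
      refine (hP p).trans (mul_le_mul_of_nonneg_right hCC ?_)
      exact (Real.rpow_pos_of_pos (theta_pos p) _).le
    · intro pr hpr
      have hp := hperm pr hpr
      have hmem1 : ∀ e ∈ pr.1, OKdir σ e := fun e he =>
        hok e (hp.mem_iff.1 (List.mem_append.2 (Or.inl he)))
      have hmem2 : ∀ e ∈ pr.2, OKdir σ e := fun e he =>
        hok e (hp.mem_iff.1 (List.mem_append.2 (Or.inr he)))
      have hlen' : pr.1.length + pr.2.length = L.length := by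
        simpa using hp.length_eq
      have hW : Wt pr.1 + Wt pr.2 = Wt L := by
        have := (hp.map Prod.snd).sum_eq
        simpa [Wt, List.map_append, List.sum_append] using this
      obtain ⟨C1, hC1, hb1⟩ := hf.2 pr.1 hmem1 (by omega)
      obtain ⟨C2, hC2, hb2⟩ := hg.2 pr.2 hmem2 (by omega)
      refine ⟨C1 * C2, by positivity, fun p => ?_⟩
      rw [abs_mul]
      calc |iterDeriv (pr.1.map Prod.fst) f p| * |iterDeriv (pr.2.map Prod.fst) g p|
          ≤ (C1 * theta σ p ^ (r - Wt pr.1)) * (C2 * theta σ p ^ (s - Wt pr.2)) := by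
            apply mul_le_mul (hb1 p) (hb2 p) (abs_nonneg _) ?_
            have : (0:ℝ) < theta σ p ^ (r - Wt pr.1) := Real.rpow_pos_of_pos (theta_pos p) _
            positivity
        _ = C1 * C2 * theta σ p ^ (r + s - Wt L) := by
            rw [show C1 * theta σ p ^ (r - Wt pr.1) * (C2 * theta σ p ^ (s - Wt pr.2))
                = C1 * C2 * (theta σ p ^ (r - Wt pr.1) * theta σ p ^ (s - Wt pr.2)) by ring,
              ← Real.rpow_add (theta_pos p),
              show r - Wt pr.1 + (s - Wt pr.2) = r + s - Wt L by rw [← hW]; ring]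
  obtain ⟨C, hC, hb⟩ := huni
  refine ⟨(T.length + 1) * C, by positivity, fun p => ?_⟩
  rw [hval p]
  have := abs_list_sum_le T
    (fun pr => iterDeriv (pr.1.map Prod.fst) f p * iterDeriv (pr.2.map Prod.fst) g p)
    (C * theta σ p ^ (r + s - Wt L)) (fun pr hpr => hb pr hpr p)
  refine this.trans ?_
  have h0 : (0:ℝ) ≤ C * theta σ p ^ (r + s - Wt L) := by
    have : (0:ℝ) < theta σ p ^ (r + s - Wt L) := Real.rpow_pos_of_pos (theta_pos p) _
    positivity
  nlinarith [h0]

lemma coord_le_norm (x : Rd d) (j : Fin d) : |x j| ≤ ‖x‖ := by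
  rw [EuclideanSpace.norm_eq, show |x j| = Real.sqrt ((x j)^2) from (Real.sqrt_sq_eq_abs _).symm]
  apply Real.sqrt_le_sqrt
  have h : ‖x j‖^2 = (x j)^2 := by rw [Real.norm_eq_abs, sq_abs]
  rw [← h]
  exact Finset.single_le_sum (f := fun i => ‖x i‖^2) (fun i _ => sq_nonneg _) (Finset.mem_univ j)

lemma norm_sq_sum (x : Rd d) : ‖x‖^(2:ℕ) = ∑ i, (x i)^2 := by
  rw [EuclideanSpace.norm_eq, Real.sq_sqrt (by positivity)]
  exact Finset.sum_congr rfl (fun i _ => by rw [Real.norm_eq_abs, sq_abs])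

lemma good_clm (hσ : 0 < σ) (ℓ : (Rd d × Rd d) →L[ℝ] ℝ) (r : ℝ) (C0 : ℝ) (hC0 : 0 < C0)
    (h0 : ∀ p, |ℓ p| ≤ C0 * theta σ p ^ r)
    (h1 : ∀ e : (Rd d × Rd d) × ℝ, OKdir σ e → ℓ e.1 ≠ 0 → e.2 ≤ r) (N : ℕ) :
    GoodN σ N r ⇑ℓ := by
  refine ⟨ℓ.contDiff, fun L hok hlen => ?_⟩
  rcases List.eq_nil_or_concat L with rfl | ⟨l, e, rfl⟩
  · exact ⟨C0, hC0, by simpa [Wt] using h0⟩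
  · have hL : l.concat e = l ++ [e] := List.concat_eq_append
    have hmapL : (l.concat e).map Prod.fst = l.map Prod.fst ++ [e.1] := by
      rw [hL, List.map_append]; rfl
    rw [hmapL]
    have hconst : (fun p : Rd d × Rd d => fderiv ℝ ⇑ℓ p e.1) = fun _ => ℓ e.1 := by
      funext p; rw [ℓ.fderiv]
    have hiter : iterDeriv (l.map Prod.fst ++ [e.1]) ⇑ℓ
        = iterDeriv (l.map Prod.fst) (fun _ => ℓ e.1) := by
      rw [iterDeriv_concat, hconst]
    have hWt : Wt (l.concat e) = Wt l + e.2 := by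
      simp [Wt, hL, List.map_append]
    match l with
    | [] =>
        refine ⟨|ℓ e.1| + 1, by positivity, fun p => ?_⟩
        rw [hiter]
        simp only [List.map_nil, iterDeriv_nil]
        by_cases hz : ℓ e.1 = 0
        · rw [hz, abs_zero]
          have : (0:ℝ) < theta σ p ^ (r - Wt ([].concat e)) :=
            Real.rpow_pos_of_pos (theta_pos p) _
          positivity
        · have he2 : e.2 ≤ r := h1 e (hok e (by simp [hL])) hz
          have hWt0 : Wt ([].concat e) = e.2 := by simp [Wt]
          rw [hWt0]
          have h2 : (1:ℝ) ≤ theta σ p ^ (r - e.2) :=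
            Real.one_le_rpow (theta_ge_one p) (by linarith)
          nlinarith [abs_nonneg (ℓ e.1)]
    | v :: l' =>
        refine ⟨1, one_pos, fun p => ?_⟩
        rw [hiter]
        simp only [List.map_cons, iterDeriv_const_cons, abs_zero]
        have : (0:ℝ) < theta σ p ^ (r - Wt ((v :: l').concat e)) :=
          Real.rpow_pos_of_pos (theta_pos p) _
        positivity

def clmX (j : Fin d) : (Rd d × Rd d) →L[ℝ] ℝ :=
  (EuclideanSpace.proj j).comp (ContinuousLinearMap.fst ℝ (Rd d) (Rd d))

def clmXi (j : Fin d) : (Rd d × Rd d) →L[ℝ] ℝ :=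
  (EuclideanSpace.proj j).comp (ContinuousLinearMap.snd ℝ (Rd d) (Rd d))

lemma good_X (hσ : 0 < σ) (hσ1 : σ ≤ 1 ∨ True) (j : Fin d) (N : ℕ) :
    GoodN σ N 1 (fun p : Rd d × Rd d => p.1 j) := by
  have := good_clm (d := d) hσ (clmX j) 1 1 one_pos ?_ ?_ N
  · exact this
  · intro p
    have h1 : |(clmX j) p| = |p.1 j| := rfl
    rw [h1, Real.rpow_one, one_mul]
    exact (coord_le_norm p.1 j).trans (norm_fst_le_theta p)
  · rintro e (⟨i, rfl⟩ | ⟨i, rfl⟩)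
    · intro _; exact le_refl 1
    · intro hz
      exfalso; apply hz
      show (EuclideanSpace.proj j) (0 : Rd d) = 0
      simp
  
lemma good_Xi (hσ : 0 < σ) (j : Fin d) (N : ℕ) :
    GoodN σ N σ (fun p : Rd d × Rd d => p.2 j) := by
  have := good_clm (d := d) hσ (clmXi j) σ 1 one_pos ?_ ?_ N
  · exact this
  · intro p
    have h1 : |(clmXi j) p| = |p.2 j| := rfl
    rw [h1, one_mul]
    exact (coord_le_norm p.2 j).trans (norm_snd_le_theta hσ p)
  · rintro e (⟨i, rfl⟩ | ⟨i, rfl⟩)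
    · intro hz
      exfalso; apply hz
      show (EuclideanSpace.proj j) (0 : Rd d) = 0
      simp
    · intro _; exact le_refl σ

lemma good_finsum {N : ℕ} {r : ℝ} (hr : 0 ≤ r) {ι : Type*} (s : Finset ι)
    (f : ι → Rd d × Rd d → ℝ) (h : ∀ i ∈ s, GoodN σ N r (f i)) :
    GoodN σ N r (fun p => ∑ i ∈ s, f i p) := by
  classical
  induction s using Finset.induction_on with
  | empty => simpa using good_const hr 0
  | insert a s hnotmem ih =>
      have : (fun p => ∑ i ∈ insert a s, f i p) = fun p => f a p + ∑ i ∈ s, f i p := by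
        funext p; rw [Finset.sum_insert hnotmem]
      rw [this]
      exact good_add (h a (Finset.mem_insert_self a s))
        (ih (fun i hi => h i (Finset.mem_insert_of_mem hi)))

lemma good_pow {N : ℕ} {r : ℝ} (hr : 0 ≤ r) {f : Rd d × Rd d → ℝ}
    (hf : GoodN σ N r f) (j : ℕ) : GoodN σ N (j * r) (fun p => f p ^ j) := by
  induction j with
  | zero => simpa using good_const (le_refl (0:ℝ)) 1
  | succ i ih =>
      have : (fun p => f p ^ (i+1)) = fun p => f p ^ i * f p := by
        funext p; ring
      rw [this]
      have := good_mul ih hf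
      rw [show (i:ℝ) * r + r = (↑(i+1)) * r by push_cast; ring] at this
      exact this

end shubin

section weight
variable {d : ℕ}

lemma hasFDerivAt_npow {E : Type*} [NormedAddCommGroup E] [NormedSpace ℝ E]
    {f : E → ℝ} {f' : E →L[ℝ] ℝ} {x : E} (h : HasFDerivAt f f' x) (nn : ℕ) :
    HasFDerivAt (fun y => f y ^ nn) (((nn : ℝ) * f x ^ (nn-1)) • f') x := by
  induction nn with
  | zero => simpa using hasFDerivAt_const (1:ℝ) x
  | succ j ih =>
      have h2 := ih.fun_mul h
      have : (fun y => f y ^ j * f y) = fun y => f y ^ (j+1) := by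
        funext y; ring
      rw [this] at h2
      refine h2.congr_fderiv (Eq.symm ?_)
      rw [smul_smul, ← add_smul]
      congr 1
      cases j with
      | zero => simp
      | succ i =>
          simp only [Nat.add_sub_cancel]
          push_cast
          rw [pow_succ]
          ring

def S1 : Rd d × Rd d → ℝ := fun p => ∑ i, (p.1 i)^2
def S2 : Rd d × Rd d → ℝ := fun p => ∑ i, (p.2 i)^2
def uu (k m : ℕ) : Rd d × Rd d → ℝ := fun p => 1 + S1 p ^ k + S2 p ^ m

lemma S1_nonneg (p : Rd d × Rd d) : 0 ≤ S1 p := Finset.sum_nonneg fun i _ => sq_nonneg _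
lemma S2_nonneg (p : Rd d × Rd d) : 0 ≤ S2 p := Finset.sum_nonneg fun i _ => sq_nonneg _

lemma one_le_uu (k m : ℕ) (p : Rd d × Rd d) : 1 ≤ uu k m p := by
  have h1 := S1_nonneg p; have h2 := S2_nonneg p
  have := pow_nonneg h1 k; have := pow_nonneg h2 m
  unfold uu; linarith

lemma uu_pos (k m : ℕ) (p : Rd d × Rd d) : 0 < uu k m p :=
  lt_of_lt_of_le one_pos (one_le_uu k m p)

lemma S1_eq (p : Rd d × Rd d) : S1 p = ‖p.1‖^(2:ℕ) := (norm_sq_sum p.1).symm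
lemma S2_eq (p : Rd d × Rd d) : S2 p = ‖p.2‖^(2:ℕ) := (norm_sq_sum p.2).symm

lemma uu_eq (k m : ℕ) (p : Rd d × Rd d) :
    uu k m p = 1 + ‖p.1‖^(2*k) + ‖p.2‖^(2*m) := by
  unfold uu
  rw [S1_eq, S2_eq, ← pow_mul, ← pow_mul]

lemma contDiff_S1 : ContDiff ℝ (⊤:ℕ∞) (S1 (d:=d)) := by
  apply ContDiff.sum
  intro i _
  exact ((clmX i).contDiff).pow 2

lemma contDiff_S2 : ContDiff ℝ (⊤:ℕ∞) (S2 (d:=d)) := by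
  apply ContDiff.sum
  intro i _
  exact ((clmXi i).contDiff).pow 2

lemma contDiff_uu (k m : ℕ) : ContDiff ℝ (⊤:ℕ∞) (uu (d:=d) k m) :=
  (contDiff_const.add (contDiff_S1.pow k)).add (contDiff_S2.pow m)

lemma contDiff_upow (k m : ℕ) (t : ℝ) :
    ContDiff ℝ (⊤:ℕ∞) (fun p : Rd d × Rd d => uu k m p ^ t) := by
  rw [contDiff_iff_contDiffAt]
  intro p
  exact ((contDiff_uu k m).contDiffAt).rpow_const_of_ne (uu_pos k m p).ne'

lemma hasFDerivAt_S1 (p : Rd d × Rd d) :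
    HasFDerivAt (S1 (d:=d)) (∑ i, (2 * p.1 i) • (clmX i)) p := by
  apply HasFDerivAt.fun_sum
  intro i _
  have h := hasFDerivAt_npow ((clmX (d:=d) i).hasFDerivAt (x := p)) 2
  simp at h; exact h

lemma hasFDerivAt_S2 (p : Rd d × Rd d) :
    HasFDerivAt (S2 (d:=d)) (∑ i, (2 * p.2 i) • (clmXi i)) p := by
  apply HasFDerivAt.fun_sum
  intro i _
  have h := hasFDerivAt_npow ((clmXi (d:=d) i).hasFDerivAt (x := p)) 2
  simp at h; exact h

def Duu (k m : ℕ) (p : Rd d × Rd d) : (Rd d × Rd d) →L[ℝ] ℝ :=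
  ((k:ℝ) * S1 p ^ (k-1)) • (∑ i, (2 * p.1 i) • (clmX i))
    + ((m:ℝ) * S2 p ^ (m-1)) • (∑ i, (2 * p.2 i) • (clmXi i))

lemma hasFDerivAt_uu (k m : ℕ) (p : Rd d × Rd d) :
    HasFDerivAt (uu (d:=d) k m) (Duu k m p) p := by
  have h1 := hasFDerivAt_npow (hasFDerivAt_S1 p) k
  have h2 := hasFDerivAt_npow (hasFDerivAt_S2 p) m
  exact (h1.const_add 1).add h2

lemma fderiv_upow_apply (k m : ℕ) (t : ℝ) (p v : Rd d × Rd d) :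
    fderiv ℝ (fun q => uu (d:=d) k m q ^ t) p v
      = t * uu k m p ^ (t-1) * Duu k m p v := by
  have h := (hasFDerivAt_uu k m p).rpow_const (p := t) (Or.inl (uu_pos k m p).ne')
  rw [h.fderiv]
  simp [mul_assoc]

lemma Duu_apply_X (k m : ℕ) (p : Rd d × Rd d) (j : Fin d) :
    Duu k m p (EuclideanSpace.single j (1:ℝ), (0 : Rd d))
      = 2 * (k:ℝ) * S1 p ^ (k-1) * p.1 j := by
  have hX : ∀ i : Fin d, clmX (d:=d) i (EuclideanSpace.single j (1:ℝ), (0 : Rd d))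
      = if i = j then 1 else 0 := by
    intro i
    show EuclideanSpace.single j (1:ℝ) i = _
    rw [EuclideanSpace.single_apply]
  have hXi : ∀ i : Fin d, clmXi (d:=d) i (EuclideanSpace.single j (1:ℝ), (0 : Rd d)) = 0 := by
    intro i
    show (0 : Rd d) i = 0
    rfl
  unfold Duu
  simp only [ContinuousLinearMap.add_apply, ContinuousLinearMap.smul_apply,
    ContinuousLinearMap.sum_apply, hX, hXi, smul_eq_mul, mul_ite, mul_one, mul_zero]
  rw [Finset.sum_ite_eq' Finset.univ j (fun i => 2 * p.1 i)]
  simp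
  ring

lemma Duu_apply_Xi (k m : ℕ) (p : Rd d × Rd d) (j : Fin d) :
    Duu k m p ((0 : Rd d), EuclideanSpace.single j (1:ℝ))
      = 2 * (m:ℝ) * S2 p ^ (m-1) * p.2 j := by
  have hXi : ∀ i : Fin d, clmXi (d:=d) i ((0 : Rd d), EuclideanSpace.single j (1:ℝ))
      = if i = j then 1 else 0 := by
    intro i
    show EuclideanSpace.single j (1:ℝ) i = _
    rw [EuclideanSpace.single_apply]
  have hX : ∀ i : Fin d, clmX (d:=d) i ((0 : Rd d), EuclideanSpace.single j (1:ℝ)) = 0 := by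
    intro i
    show (0 : Rd d) i = 0
    rfl
  unfold Duu
  simp only [ContinuousLinearMap.add_apply, ContinuousLinearMap.smul_apply,
    ContinuousLinearMap.sum_apply, hX, hXi, smul_eq_mul, mul_ite, mul_one, mul_zero]
  rw [Finset.sum_ite_eq' Finset.univ j (fun i => 2 * p.2 i)]
  simp
  ring

end weight

section main
variable {d : ℕ} {k m : ℕ}

lemma sigma_pos (hk : 0 < k) (hm : 0 < m) : 0 < (k:ℝ)/m := by positivity

lemma uu_le_theta (hk : 0 < k) (hm : 0 < m) (p : Rd d × Rd d) :
    uu k m p ≤ 3 * theta ((k:ℝ)/m) p ^ (2*(k:ℝ)) := by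
  set σ : ℝ := (k:ℝ)/m with hσdef
  have hσ : 0 < σ := sigma_pos hk hm
  have hθ1 : (1:ℝ) ≤ theta σ p := theta_ge_one p
  have e1 : (1:ℝ) ≤ theta σ p ^ (2*(k:ℝ)) := Real.one_le_rpow hθ1 (by positivity)
  have e2 : S1 p ^ k ≤ theta σ p ^ (2*(k:ℝ)) := by
    rw [S1_eq, ← pow_mul, ← Real.rpow_natCast ‖p.1‖ (2*k)]
    have h := Real.rpow_le_rpow (norm_nonneg p.1) (norm_fst_le_theta (σ := σ) p)
      (z := ((2*k : ℕ):ℝ)) (by positivity)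
    rw [show 2*(k:ℝ) = (((2*k : ℕ)):ℝ) by push_cast; ring]
    exact h
  have e3 : S2 p ^ m ≤ theta σ p ^ (2*(k:ℝ)) := by
    rw [S2_eq, ← pow_mul, ← Real.rpow_natCast ‖p.2‖ (2*m)]
    have h1 := Real.rpow_le_rpow (norm_nonneg p.2) (norm_snd_le_theta hσ p)
      (z := ((2*m : ℕ):ℝ)) (by positivity)
    have h2 : (theta σ p ^ σ) ^ (((2*m : ℕ)):ℝ) = theta σ p ^ (2*(k:ℝ)) := by
      rw [← Real.rpow_mul (le_of_lt (theta_pos p))]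
      congr 1
      rw [hσdef]
      push_cast
      field_simp
    rw [h2] at h1
    exact h1
  unfold uu
  linarith

lemma theta_le_uu (hk : 0 < k) (hm : 0 < m) (p : Rd d × Rd d) :
    theta ((k:ℝ)/m) p ^ (2*(k:ℝ)) ≤ (3:ℝ) ^ (2*(k:ℝ)) * uu k m p := by
  set σ : ℝ := (k:ℝ)/m with hσdef
  have hσ : 0 < σ := sigma_pos hk hm
  set M : ℝ := max 1 (max ‖p.1‖ (‖p.2‖ ^ (1/σ))) with hMdef
  have hM1 : (1:ℝ) ≤ M := le_max_left _ _
  have hM0 : (0:ℝ) ≤ M := by linarith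
  have hθM : theta σ p ≤ 3 * M := by
    have h1 : ‖p.1‖ ≤ M := le_trans (le_max_left _ _) (le_max_right _ _)
    have h2 : ‖p.2‖ ^ (1/σ) ≤ M := le_trans (le_max_right _ _) (le_max_right _ _)
    unfold theta; linarith
  have hMu : M ^ (2*(k:ℝ)) ≤ uu k m p := by
    have huu : uu k m p = 1 + S1 p ^ k + S2 p ^ m := rfl
    have hS1 := S1_nonneg p; have hS2 := S2_nonneg p
    have hp1 := pow_nonneg hS1 k; have hp2 := pow_nonneg hS2 m
    rcases max_choice 1 (max ‖p.1‖ (‖p.2‖ ^ (1/σ))) with hM | hM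
    · rw [hMdef, hM, Real.one_rpow]
      linarith
    · rw [hMdef, hM]
      rcases max_choice ‖p.1‖ (‖p.2‖ ^ (1/σ)) with hM' | hM'
      · rw [hM']
        have : ‖p.1‖ ^ (2*(k:ℝ)) = S1 p ^ k := by
          rw [S1_eq, ← pow_mul, ← Real.rpow_natCast ‖p.1‖ (2*k)]
          congr 1
          push_cast; ring
        rw [this]
        linarith
      · rw [hM']
        have : (‖p.2‖ ^ (1/σ)) ^ (2*(k:ℝ)) = S2 p ^ m := by
          rw [← Real.rpow_mul (norm_nonneg p.2)]
          rw [show 1/σ * (2*(k:ℝ)) = ((2*m : ℕ):ℝ) by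
            rw [hσdef]; push_cast; field_simp]
          rw [Real.rpow_natCast, S2_eq, ← pow_mul]
        rw [this]
        linarith
  calc theta σ p ^ (2*(k:ℝ)) ≤ (3*M) ^ (2*(k:ℝ)) :=
        Real.rpow_le_rpow (le_of_lt (theta_pos p)) hθM (by positivity)
    _ = (3:ℝ) ^ (2*(k:ℝ)) * M ^ (2*(k:ℝ)) := Real.mul_rpow (by norm_num) hM0
    _ ≤ (3:ℝ) ^ (2*(k:ℝ)) * uu k m p := by
        have : (0:ℝ) < (3:ℝ) ^ (2*(k:ℝ)) := Real.rpow_pos_of_pos (by norm_num) _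
        nlinarith

lemma upow_base (hk : 0 < k) (hm : 0 < m) (t : ℝ) :
    ∃ C, 0 < C ∧ ∀ p : Rd d × Rd d,
      uu k m p ^ t ≤ C * theta ((k:ℝ)/m) p ^ (2*(k:ℝ)*t) := by
  set σ : ℝ := (k:ℝ)/m
  rcases le_or_gt 0 t with ht | ht
  · refine ⟨(3:ℝ) ^ t, Real.rpow_pos_of_pos (by norm_num) _, fun p => ?_⟩
    calc uu k m p ^ t ≤ (3 * theta σ p ^ (2*(k:ℝ))) ^ t :=
          Real.rpow_le_rpow (le_of_lt (uu_pos k m p)) (uu_le_theta hk hm p) ht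
      _ = (3:ℝ) ^ t * theta σ p ^ (2*(k:ℝ)*t) := by
          rw [Real.mul_rpow (by norm_num) (Real.rpow_nonneg (le_of_lt (theta_pos p)) _),
            ← Real.rpow_mul (le_of_lt (theta_pos p))]
  · refine ⟨((3:ℝ) ^ (2*(k:ℝ))) ^ (-t), Real.rpow_pos_of_pos (Real.rpow_pos_of_pos (by norm_num) _) _,
      fun p => ?_⟩
    have h1 : (((3:ℝ) ^ (2*(k:ℝ))) * uu k m p) ^ t ≤ (theta σ p ^ (2*(k:ℝ))) ^ t :=
      Real.rpow_le_rpow_of_nonpos (Real.rpow_pos_of_pos (theta_pos p) _)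
        (theta_le_uu hk hm p) ht.le
    rw [Real.mul_rpow (Real.rpow_nonneg (by norm_num) _) (le_of_lt (uu_pos k m p)),
      ← Real.rpow_mul (le_of_lt (theta_pos p))] at h1
    have h2 : ((3:ℝ) ^ (2*(k:ℝ))) ^ t * uu k m p ^ t ≤ theta σ p ^ (2*(k:ℝ)*t) := h1
    have h3 : (0:ℝ) < ((3:ℝ) ^ (2*(k:ℝ))) ^ t :=
      Real.rpow_pos_of_pos (Real.rpow_pos_of_pos (by norm_num) _) _
    have h4 : ((3:ℝ) ^ (2*(k:ℝ))) ^ (-t) * (((3:ℝ) ^ (2*(k:ℝ))) ^ t * uu k m p ^ t)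
        = uu k m p ^ t := by
      rw [← mul_assoc, ← Real.rpow_add (Real.rpow_pos_of_pos (by norm_num) _)]
      simp
    calc uu k m p ^ t = _ := h4.symm
      _ ≤ ((3:ℝ) ^ (2*(k:ℝ))) ^ (-t) * theta σ p ^ (2*(k:ℝ)*t) := by
          apply mul_le_mul_of_nonneg_left h2
          positivity
lemma good_S1 (hk : 0 < k) (hm : 0 < m) (N : ℕ) : GoodN ((k:ℝ)/m) N 2 (S1 (d:=d)) := by
  have hσ : 0 < (k:ℝ)/m := sigma_pos hk hm
  have h : ∀ i : Fin d, GoodN ((k:ℝ)/m) N 2 (fun p : Rd d × Rd d => (p.1 i)^2) := by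
    intro i
    have h1 := good_mul (good_X hσ (Or.inr trivial) i N) (good_X hσ (Or.inr trivial) i N)
    have h2 : (fun p : Rd d × Rd d => (p.1 i)^2) = fun p => p.1 i * p.1 i := by
      funext p; ring
    rw [h2]
    exact good_mono (by norm_num) h1
  have := good_finsum (σ := (k:ℝ)/m) (by norm_num : (0:ℝ) ≤ 2) Finset.univ
    (fun i (p : Rd d × Rd d) => (p.1 i)^2) (fun i _ => h i)
  exact this

lemma good_S2 (hk : 0 < k) (hm : 0 < m) (N : ℕ) :
    GoodN ((k:ℝ)/m) N (2*((k:ℝ)/m)) (S2 (d:=d)) := by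
  have hσ : 0 < (k:ℝ)/m := sigma_pos hk hm
  have h : ∀ i : Fin d, GoodN ((k:ℝ)/m) N (2*((k:ℝ)/m)) (fun p : Rd d × Rd d => (p.2 i)^2) := by
    intro i
    have h1 := good_mul (good_Xi hσ i N) (good_Xi hσ i N)
    have h2 : (fun p : Rd d × Rd d => (p.2 i)^2) = fun p => p.2 i * p.2 i := by
      funext p; ring
    rw [h2]
    exact good_mono (by ring_nf; exact le_refl _) h1
  exact good_finsum (by positivity) Finset.univ (fun i (p : Rd d × Rd d) => (p.2 i)^2)
    (fun i _ => h i)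

lemma good_gX (hk : 0 < k) (hm : 0 < m) (j : Fin d) (N : ℕ) :
    GoodN ((k:ℝ)/m) N (2*(k:ℝ) - 1)
      (fun p : Rd d × Rd d => 2*(k:ℝ) * S1 p ^ (k-1) * p.1 j) := by
  have hσ : 0 < (k:ℝ)/m := sigma_pos hk hm
  have h1 : GoodN ((k:ℝ)/m) N 0 (fun _ : Rd d × Rd d => 2*(k:ℝ)) := good_const le_rfl _
  have h2 := good_pow (by norm_num : (0:ℝ) ≤ 2) (good_S1 (d:=d) hk hm N) (k-1)
  have h3 := good_mul (good_mul h1 h2) (good_X hσ (Or.inr trivial) j N)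
  have he : (0 + ((k-1:ℕ):ℝ) * 2) + 1 = 2*(k:ℝ) - 1 := by
    rw [Nat.cast_sub hk]
    push_cast; ring
  rw [he] at h3
  exact h3

lemma good_gXi (hk : 0 < k) (hm : 0 < m) (j : Fin d) (N : ℕ) :
    GoodN ((k:ℝ)/m) N (2*(k:ℝ) - (k:ℝ)/m)
      (fun p : Rd d × Rd d => 2*(m:ℝ) * S2 p ^ (m-1) * p.2 j) := by
  have hσ : 0 < (k:ℝ)/m := sigma_pos hk hm
  have h1 : GoodN ((k:ℝ)/m) N 0 (fun _ : Rd d × Rd d => 2*(m:ℝ)) := good_const le_rfl _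
  have h2 := good_pow (by positivity : (0:ℝ) ≤ 2*((k:ℝ)/m)) (good_S2 (d:=d) hk hm N) (m-1)
  have h3 := good_mul (good_mul h1 h2) (good_Xi hσ j N)
  have he : (0 + ((m-1:ℕ):ℝ) * (2*((k:ℝ)/m))) + (k:ℝ)/m = 2*(k:ℝ) - (k:ℝ)/m := by
    rw [Nat.cast_sub hm]
    have hm0 : (m:ℝ) ≠ 0 := Nat.cast_ne_zero.mpr hm.ne'
    field_simp
    ring
  rw [he] at h3
  exact h3

lemma good_upow (hk : 0 < k) (hm : 0 < m) (N : ℕ) :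
    ∀ t : ℝ, GoodN ((k:ℝ)/m) N (2*(k:ℝ)*t) (fun p : Rd d × Rd d => uu k m p ^ t) := by
  induction N with
  | zero =>
      intro t
      refine ⟨contDiff_upow k m t, fun L hok hlen => ?_⟩
      have hL : L = [] := List.length_eq_zero_iff.mp (Nat.le_zero.mp hlen)
      subst hL
      obtain ⟨C, hC, hb⟩ := upow_base (d:=d) hk hm t
      exact ⟨C, hC, fun p => by
        simpa [Wt, abs_of_pos (Real.rpow_pos_of_pos (uu_pos k m p) t)] using hb p⟩
  | succ N ihN =>
      intro t
      refine ⟨contDiff_upow k m t, fun L hok hlen => ?_⟩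
      rcases List.eq_nil_or_concat L with rfl | ⟨l, e, rfl⟩
      · obtain ⟨C, hC, hb⟩ := upow_base (d:=d) hk hm t
        exact ⟨C, hC, fun p => by
          simpa [Wt, abs_of_pos (Real.rpow_pos_of_pos (uu_pos k m p) t)] using hb p⟩
      · have hok_l : ∀ e' ∈ l, OKdir ((k:ℝ)/m) e' := fun e' he' =>
          hok e' (by simp [List.concat_eq_append, he'])
        have hlen_l : l.length ≤ N := by
          simp only [List.concat_eq_append, List.length_append, List.length_cons,
            List.length_nil] at hlen
          omega
        have hWt : Wt (l.concat e) = Wt l + e.2 := by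
          simp [Wt, List.concat_eq_append, List.map_append]
        have hmap : (l.concat e).map Prod.fst = l.map Prod.fst ++ [e.1] := by
          simp [List.concat_eq_append]
        have hmem_e : e ∈ l.concat e := by simp [List.concat_eq_append]
        rcases hok e hmem_e with ⟨j, rfl⟩ | ⟨j, rfl⟩
        · have hfun : (fun p : Rd d × Rd d => fderiv ℝ (fun q => uu k m q ^ t) p
              (EuclideanSpace.single j (1:ℝ), (0:Rd d)))
              = fun p => (t * uu k m p ^ (t-1)) * (2*(k:ℝ) * S1 p ^ (k-1) * p.1 j) := by
            funext p
            rw [fderiv_upow_apply, Duu_apply_X]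
          have hg := good_mul (good_mul (good_const le_rfl t) (ihN (t-1)))
            (good_gX hk hm j N)
          obtain ⟨C, hC, hb⟩ := hg.2 l hok_l hlen_l
          refine ⟨C, hC, fun p => ?_⟩
          rw [hmap, iterDeriv_concat, hfun]
          refine (hb p).trans (le_of_eq ?_)
          have hWt' : Wt (l.concat ((EuclideanSpace.single j (1:ℝ), (0:Rd d)), (1:ℝ)))
              = Wt l + 1 := by simpa using hWt
          rw [show 0 + 2*(k:ℝ)*(t-1) + (2*(k:ℝ) - 1) - Wt l
              = 2*(k:ℝ)*t - Wt (l.concat ((EuclideanSpace.single j (1:ℝ), (0:Rd d)), (1:ℝ)))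
            by rw [hWt']; ring]
        · have hfun : (fun p : Rd d × Rd d => fderiv ℝ (fun q => uu k m q ^ t) p
              ((0:Rd d), EuclideanSpace.single j (1:ℝ)))
              = fun p => (t * uu k m p ^ (t-1)) * (2*(m:ℝ) * S2 p ^ (m-1) * p.2 j) := by
            funext p
            rw [fderiv_upow_apply, Duu_apply_Xi]
          have hg := good_mul (good_mul (good_const le_rfl t) (ihN (t-1)))
            (good_gXi hk hm j N)
          obtain ⟨C, hC, hb⟩ := hg.2 l hok_l hlen_l
          refine ⟨C, hC, fun p => ?_⟩
          rw [hmap, iterDeriv_concat, hfun]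
          refine (hb p).trans (le_of_eq ?_)
          have hWt' : Wt (l.concat (((0:Rd d), EuclideanSpace.single j (1:ℝ)), (k:ℝ)/m))
              = Wt l + (k:ℝ)/m := by simpa using hWt
          rw [show 0 + 2*(k:ℝ)*(t-1) + (2*(k:ℝ) - (k:ℝ)/m) - Wt l
              = 2*(k:ℝ)*t - Wt (l.concat (((0:Rd d), EuclideanSpace.single j (1:ℝ)), (k:ℝ)/m))
            by rw [hWt']; ring]
end main

section assembly
variable {d : ℕ}

lemma iterDeriv_ofReal {E : Type*} [NormedAddCommGroup E] [NormedSpace ℝ E]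
    (f : E → ℝ) (hf : ContDiff ℝ (⊤:ℕ∞) f) (l : List E) :
    iterDeriv l (fun q => ((f q : ℝ) : ℂ)) = fun p => ((iterDeriv l f p : ℝ) : ℂ) := by
  induction l with
  | nil => rfl
  | cons v l ih =>
      funext p
      show fderiv ℝ (iterDeriv l fun q => ((f q : ℝ) : ℂ)) p v = _
      rw [ih]
      have hg : HasFDerivAt (iterDeriv l f) (fderiv ℝ (iterDeriv l f) p) p :=
        ((iterDeriv_contDiff hf l).diffAt').hasFDerivAt
      have hcomp := Complex.ofRealCLM.hasFDerivAt.comp p hg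
      have heq : (fun q => ((iterDeriv l f q : ℝ) : ℂ))
          = ⇑Complex.ofRealCLM ∘ iterDeriv l f := rfl
      rw [heq, hcomp.fderiv]
      rfl

lemma sum_map_const {γ : Type*} (L : List γ) (c : ℝ) :
    (L.map fun _ => c).sum = L.length * c := by
  induction L with
  | nil => simp
  | cons a L ih => simp [ih]; ring

lemma xDirs_mem {α : Fin d → ℕ} {v : Rd d × Rd d} (hv : v ∈ xDirs α) :
    ∃ j, v = (EuclideanSpace.single j (1:ℝ), (0:Rd d)) := by
  unfold xDirs at hv
  rw [List.mem_flatten] at hv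
  obtain ⟨lst, hl, hv⟩ := hv
  rw [List.mem_map] at hl
  obtain ⟨j, _, rfl⟩ := hl
  exact ⟨j, List.eq_of_mem_replicate hv⟩

lemma xiDirs_mem {β : Fin d → ℕ} {v : Rd d × Rd d} (hv : v ∈ xiDirs β) :
    ∃ j, v = ((0:Rd d), EuclideanSpace.single j (1:ℝ)) := by
  unfold xiDirs at hv
  rw [List.mem_flatten] at hv
  obtain ⟨lst, hl, hv⟩ := hv
  rw [List.mem_map] at hl
  obtain ⟨j, _, rfl⟩ := hl
  exact ⟨j, List.eq_of_mem_replicate hv⟩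

lemma xDirs_length (α : Fin d → ℕ) : ((xDirs α).length : ℝ) = ∑ j, (α j : ℝ) := by
  unfold xDirs
  rw [List.length_flatten, List.map_map]
  have h1 : (List.length ∘ fun j =>
      List.replicate (α j) ((EuclideanSpace.single j (1:ℝ), (0:Rd d)))) = α := by
    funext j; simp [Function.comp]
  rw [h1]
  rw [show ∑ j, ((α j : ℝ)) = ((List.map (fun j => (α j : ℝ)) (List.finRange d)).sum)
    from Fin.sum_univ_def _]
  rw [Nat.cast_list_sum, List.map_map]
  rfl

lemma xiDirs_length (β : Fin d → ℕ) : ((xiDirs β).length : ℝ) = ∑ j, (β j : ℝ) := by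
  unfold xiDirs
  rw [List.length_flatten, List.map_map]
  have h1 : (List.length ∘ fun j =>
      List.replicate (β j) (((0:Rd d), EuclideanSpace.single j (1:ℝ)))) = β := by
    funext j; simp [Function.comp]
  rw [h1]
  rw [show ∑ j, ((β j : ℝ)) = ((List.map (fun j => (β j : ℝ)) (List.finRange d)).sum)
    from Fin.sum_univ_def _]
  rw [Nat.cast_list_sum, List.map_map]
  rfl

end assembly

/-- For `k, m ∈ ℕ \ {0}`, `σ = k/m`, the weight
`w_{k,m}(x,ξ) = (1 + |x|^{2k} + |ξ|^{2m})^{1/2}` satisfies `w_{k,m}^n ∈ G^{nk,σ}`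
for every `n ∈ ℝ`. -/
theorem statement2 {d : ℕ} (k m : ℕ) (hk : 0 < k) (hm : 0 < m) (n : ℝ) :
    IsShubin ((k : ℝ) / (m : ℝ)) (n * k)
      (fun p : Rd d × Rd d =>
        (((((1 + ‖p.1‖ ^ (2 * k) + ‖p.2‖ ^ (2 * m)) ^ ((1 : ℝ) / 2)) ^ n : ℝ)) : ℂ)) := by
  set σ : ℝ := (k:ℝ)/m with hσdef
  set f : Rd d × Rd d → ℝ := fun p => uu k m p ^ (n/2) with hfdef
  have hfsm : ContDiff ℝ (⊤:ℕ∞) f := contDiff_upow k m (n/2)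
  have hfa : (fun p : Rd d × Rd d =>
        (((((1 + ‖p.1‖ ^ (2 * k) + ‖p.2‖ ^ (2 * m)) ^ ((1 : ℝ) / 2)) ^ n : ℝ)) : ℂ))
      = fun p => ((f p : ℝ) : ℂ) := by
    funext p
    congr 1
    rw [hfdef]
    show ((1 + ‖p.1‖ ^ (2 * k) + ‖p.2‖ ^ (2 * m)) ^ ((1 : ℝ) / 2)) ^ n = uu k m p ^ (n/2)
    rw [← uu_eq k m p, ← Real.rpow_mul (le_of_lt (uu_pos k m p)),
      show (1:ℝ)/2*n = n/2 by ring]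
  rw [hfa]
  constructor
  · exact Complex.ofRealCLM.contDiff.comp hfsm
  · intro α β
    set L : List ((Rd d × Rd d) × ℝ) :=
      (xDirs α).map (fun v => (v,(1:ℝ))) ++ (xiDirs β).map (fun v => (v, σ)) with hLdef
    have hok : ∀ e ∈ L, OKdir σ e := by
      intro e he
      rw [hLdef, List.mem_append] at he
      rcases he with he | he <;> rw [List.mem_map] at he <;> obtain ⟨v, hv, rfl⟩ := he
      · obtain ⟨j, rfl⟩ := xDirs_mem hv
        exact Or.inl ⟨j, rfl⟩
      · obtain ⟨j, rfl⟩ := xiDirs_mem hv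
        exact Or.inr ⟨j, rfl⟩
    have hmap : L.map Prod.fst = xDirs α ++ xiDirs β := by
      rw [hLdef, List.map_append, List.map_map, List.map_map]
      simp only [Function.comp_def]
      simp
    have hW : Wt L = (∑ j, (α j:ℝ)) + σ * (∑ j, (β j:ℝ)) := by
      rw [Wt, hLdef, List.map_append, List.map_map, List.map_map]
      rw [List.sum_append]
      have e1 : (Prod.snd ∘ fun v : Rd d × Rd d => (v, (1:ℝ))) = fun _ => (1:ℝ) := rfl
      have e2 : (Prod.snd ∘ fun v : Rd d × Rd d => (v, σ)) = fun _ => σ := rfl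
      rw [e1, e2, sum_map_const, sum_map_const, xDirs_length, xiDirs_length]
      ring
    obtain ⟨C, hC, hb⟩ := (good_upow hk hm L.length (n/2)).2 L hok le_rfl
    refine ⟨C, hC, fun x ξ => ?_⟩
    have hb' := hb (x, ξ)
    rw [hmap] at hb'
    rw [iterDeriv_ofReal f hfsm]
    rw [Complex.norm_real, Real.norm_eq_abs]
    refine hb'.trans (le_of_eq ?_)
    rw [show 2*(k:ℝ)*(n/2) - Wt L
        = n * k - (∑ j, (α j:ℝ)) - σ * (∑ j, (β j:ℝ)) by rw [hW]; ring]
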